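/- Let ℓ be a labeling of the edges of the complete binary tree of height h that assigns to each edge e a vertex in the subtree below e. Then there is a root-to-leaf path on which the edge labels take at least h distinct values. (Proof by induction on h: the two edges at the root have labels in disjoint subtrees; at most one of these labels can coincide with a label deeper along the chosen path of a subtree.) -/
import Mathlib

/-- Two suffixes of the same list: the shorter is a suffix of the longer. -/
lemma suffix_of_suffix_of_length_le {α : Type*} {l₁ l₂ l₃ : List α}
    (h₁ : l₁ <:+ l₃) (h₂ : l₂ <:+ l₃) (hlen : l₁.length ≤ l₂.length) :
    l₁ <:+ l₂ := by
  rcases List.suffix_or_suffix_of_suffix h₁ h₂ with h | h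
  · exact h
  · exact (h.eq_of_length (le_antisymm h.length_le hlen)) ▸ List.suffix_rfl

lemma finite_suffixes (leaf : List Bool) : {l : List Bool | l <:+ leaf}.Finite :=
  Set.Finite.ofFinset leaf.tails.toFinset (by simp [List.mem_tails])

/-- Key inductive lemma: from any vertex `v`, for each prescribed child `b :: v`,
there is a descending path of length `k+1` through that child along which the
edge labels take at least `k+1` distinct values. -/
lemma aux (h : ℕ) (ℓ : List Bool → List Bool)
    (hdesc : ∀ l : List Bool, l.length ≤ h → l ≠ [] → l <:+ ℓ l) :
    ∀ (k : ℕ) (v : List Bool) (b : Bool), v.length + (k + 1) ≤ h →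
    ∃ leaf : List Bool, (b :: v) <:+ leaf ∧ leaf.length = v.length + (k + 1) ∧
      (k + 1) ≤ (ℓ '' {l : List Bool | v ≠ l ∧ v <:+ l ∧ l <:+ leaf}).ncard := by
  intro k
  induction k with
  | zero =>
    intro v b hk
    refine ⟨b :: v, List.suffix_rfl, by simp, ?_⟩
    have hset : {l : List Bool | v ≠ l ∧ v <:+ l ∧ l <:+ b :: v} = {b :: v} := by
      ext l
      simp only [Set.mem_setOf_eq, Set.mem_singleton_iff]
      constructor
      · rintro ⟨hne, hvl, hlb⟩
        rcases hlb with ⟨t, ht⟩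
        match t, ht with
        | [], ht => simpa using ht
        | [c], ht =>
          exfalso
          have : l.length + 1 = v.length + 1 := by
            have := congrArg List.length ht; simpa using this
          have hlv : v.length ≤ l.length := hvl.length_le
          exact hne (hvl.eq_of_length (by omega))
        | c :: c' :: t', ht =>
          exfalso
          have hlen := congrArg List.length ht
          simp only [List.length_cons, List.length_append] at hlen
          have hlv : v.length ≤ l.length := hvl.length_le
          omega
      · rintro rfl
        exact ⟨by simp, ⟨[b], rfl⟩, List.suffix_rfl⟩
    rw [hset]
    simp
  | succ k ih =>
    intro v b hk
    set d : List Bool := b :: v with hd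
    have hdlen : d.length = v.length + 1 := by simp [hd]
    have hdne : d ≠ [] := by simp [hd]
    have hdu : d <:+ ℓ d := hdesc d (by omega) hdne
    -- choose the grandchild to avoid the label of the edge (v, d)
    obtain ⟨t, ht⟩ := hdu
    have hb' : ∃ b' : Bool, ∀ y : List Bool, (b' :: d) <:+ y → y ≠ ℓ d := by
      match t, ht with
      | [], ht =>
        refine ⟨true, fun y hy hcon => ?_⟩
        rw [hcon] at hy
        have h1 : (ℓ d).length = d.length := by rw [← ht]; simp
        have h2 : d.length + 1 ≤ (ℓ d).length := hy.length_le
        omega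
      | t, ht =>
        rcases List.eq_nil_or_concat t with rfl | ⟨t₂, c, rfl⟩
        · refine ⟨true, fun y hy hcon => ?_⟩
          rw [hcon] at hy
          have h1 : (ℓ d).length = d.length := by rw [← ht]; simp
          have h2 : d.length + 1 ≤ (ℓ d).length := hy.length_le
          omega
        · refine ⟨!c, fun y hy hcon => ?_⟩
          have hcd : (c :: d) <:+ ℓ d := ⟨t₂, by simpa using ht⟩
          rw [← hcon] at hcd
          have := suffix_of_suffix_of_length_le hy hcd (by simp)
          have := this.eq_of_length (by simp)
          simp at this
    obtain ⟨b', hb'⟩ := hb'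
    obtain ⟨leaf, hleaf1, hleaf2, hleaf3⟩ := ih d b' (by omega)
    have hdleaf : d <:+ leaf := (List.suffix_cons b' d).trans hleaf1
    refine ⟨leaf, ?_, by omega, ?_⟩
    · exact hdleaf
    have hsplit : {l : List Bool | v ≠ l ∧ v <:+ l ∧ l <:+ leaf} =
        insert d {l : List Bool | d ≠ l ∧ d <:+ l ∧ l <:+ leaf} := by
      ext l
      simp only [Set.mem_setOf_eq, Set.mem_insert_iff]
      constructor
      · rintro ⟨hne, hvl, hlleaf⟩
        by_cases hld : l = d
        · exact Or.inl hld
        · refine Or.inr ⟨fun e => hld e.symm, ?_, hlleaf⟩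
          have hvlt : v.length < l.length := by
            have := hvl.length_le
            rcases lt_or_eq_of_le this with h | h
            · exact h
            · exact absurd (hvl.eq_of_length h) hne
          exact suffix_of_suffix_of_length_le hdleaf hlleaf (by omega)
      · rintro (rfl | ⟨hne, hdl, hlleaf⟩)
        · exact ⟨by simp [hd], List.suffix_cons b v, hdleaf⟩
        · refine ⟨?_, (List.suffix_cons b v).trans hdl, hlleaf⟩
          intro e
          have h1 : d.length ≤ l.length := hdl.length_le
          have h2 : l.length = v.length := by rw [← e]
          omega
    rw [hsplit, Set.image_insert_eq]
    have hfin : (ℓ '' {l : List Bool | d ≠ l ∧ d <:+ l ∧ l <:+ leaf}).Finite :=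
      ((finite_suffixes leaf).subset (fun l hl => hl.2.2)).image ℓ
    have hnotmem : ℓ d ∉ ℓ '' {l : List Bool | d ≠ l ∧ d <:+ l ∧ l <:+ leaf} := by
      rintro ⟨l, ⟨hne, hdl, hlleaf⟩, he⟩
      have hlne : l ≠ [] := by
        intro e; rw [e] at hdl
        have := hdl.length_le; simp [hd] at this
      have hllen : l.length ≤ h := by
        have := hlleaf.length_le; omega
      have hlℓ : l <:+ ℓ l := hdesc l hllen hlne
      have hb'd : (b' :: d) <:+ l := by
        refine suffix_of_suffix_of_length_le hleaf1 hlleaf ?_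
        have h1 : d.length ≤ l.length := hdl.length_le
        have : d.length < l.length := by
          rcases lt_or_eq_of_le h1 with h | h
          · exact h
          · exact absurd (hdl.eq_of_length h) hne
        simpa using this
      exact hb' (ℓ l) (hb'd.trans hlℓ) he
    rw [Set.ncard_insert_of_notMem hnotmem hfin]
    omega

theorem stmt13 (h : ℕ) (ℓ : List Bool → List Bool)
    (hdesc : ∀ l : List Bool, l.length ≤ h → l ≠ [] → l <:+ ℓ l)
    (hlen : ∀ l : List Bool, l.length ≤ h → l ≠ [] → (ℓ l).length ≤ h) :
    ∃ leaf : List Bool, leaf.length = h ∧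
      h ≤ Set.ncard (Set.image ℓ {l : List Bool | l ≠ [] ∧ l <:+ leaf}) := by
  match h with
  | 0 => exact ⟨[], rfl, by simp⟩
  | Nat.succ k =>
    obtain ⟨leaf, h1, h2, h3⟩ := aux (k + 1) ℓ hdesc k [] true (by simp)
    refine ⟨leaf, by simpa using h2, ?_⟩
    have : {l : List Bool | l ≠ [] ∧ l <:+ leaf} =
        {l : List Bool | [] ≠ l ∧ [] <:+ l ∧ l <:+ leaf} := by
      ext l; simp [ne_comm]
    rw [Set.image, this] at *
    exact h3
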